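/- In the triangle gadget {u_{i-1}, ω_i, u_i} with published weights w', a minimum-cost attack that makes the edge {u_{i-1}, u_i} the unique shortest path from u_{i-1} to u_i must remove exactly one of the edges {u_{i-1}, ω_i} or {ω_i, u_i} (incurring cost ν_i) if and only if w'({u_{i-1}, u_i}) ≥ w'({u_{i-1}, ω_i}) + w'({ω_i, u_i}); otherwise it removes no edge of the triangle. -/

import Mathlib

open SimpleGraph

/-- Length of a walk with respect to edge weights `w`. -/
noncomputable def walkLen {V : Type*} {G : SimpleGraph V} (w : Sym2 V → ℝ) {s t : V}
    (p : G.Walk s t) : ℝ := (p.edges.map w).sum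

/-- An attack on the triangle gadget on vertices `0 = u_{i-1}`, `1 = ω_i`, `2 = u_i`:
a set of removable edges (only the two detour edges `{0,1}` and `{1,2}` may be removed;
the target edge `{0,2}` is on `p*`) whose removal makes the direct edge `{0,2}` the
unique shortest path from `0` to `2`. -/
def IsTriAttack (w' : Sym2 (Fin 3) → ℝ) (E' : Finset (Sym2 (Fin 3))) : Prop :=
  ↑E' ⊆ ({s((0 : Fin 3), (1 : Fin 3)), s((1 : Fin 3), (2 : Fin 3))} : Set (Sym2 (Fin 3))) ∧
    ∀ q : ((⊤ : SimpleGraph (Fin 3)).deleteEdges ↑E').Walk 0 2, q.IsPath →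
      q.edges ≠ [s((0 : Fin 3), (2 : Fin 3))] →
      w' s((0 : Fin 3), (2 : Fin 3)) < walkLen w' q

/-- Any path from `0` to `2` in a graph on `Fin 3` is either the direct edge or the
detour through `1`. -/
lemma tri_path_edges {G : SimpleGraph (Fin 3)} (q : G.Walk 0 2) (hq : q.IsPath) :
    q.edges = [s((0 : Fin 3), (2 : Fin 3))] ∨
      q.edges = [s((0 : Fin 3), (1 : Fin 3)), s((1 : Fin 3), (2 : Fin 3))] := by
  cases q with
  | cons h q' =>
    rename_i b
    rw [Walk.cons_isPath_iff] at hq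
    obtain ⟨hq', h0⟩ := hq
    have hb : b ≠ 0 := fun hb => (hb ▸ h).ne rfl
    fin_cases b
    · exact absurd rfl hb
    · cases q' with
      | cons h' r =>
        rename_i c
        rw [Walk.cons_isPath_iff] at hq'
        obtain ⟨hr, h1⟩ := hq'
        have hc : c ≠ 1 := fun hc => (hc ▸ h').ne rfl
        have hc0 : c ≠ 0 := by
          rintro rfl
          exact h0 (by simp [Walk.support_cons, Walk.start_mem_support])
        fin_cases c
        · exact absurd rfl hc0
        · exact absurd rfl hc
        · rw [Walk.isPath_iff_eq_nil.mp hr]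
          right; simp [Walk.edges_cons]
    · rw [Walk.isPath_iff_eq_nil.mp hq']
      left; simp [Walk.edges_cons]

/-- Removing the edge `{0,1}` is always a valid attack. -/
lemma tri_attack_single (w' : Sym2 (Fin 3) → ℝ) :
    IsTriAttack w' {s((0 : Fin 3), (1 : Fin 3))} := by
  constructor
  · intro e he
    simp at he
    simp [he]
  · intro q hq hne
    rcases tri_path_edges q hq with h | h
    · exact absurd h hne
    · exfalso
      have hmem : s((0 : Fin 3), (1 : Fin 3)) ∈ q.edges := by rw [h]; simp
      have := q.edges_subset_edgeSet hmem
      rw [edgeSet_deleteEdges] at this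
      simp at this

/-- In the triangle gadget, a minimum-cost attack removes exactly one of the two detour
edges (incurring cost `ν`) iff the direct edge is at least as long as the detour;
otherwise it removes no edge of the triangle. -/
theorem stmt3 (w' : Sym2 (Fin 3) → ℝ) (hw' : ∀ e, 0 ≤ w' e) (ν : ℝ) (hν : 0 < ν)
    (c : Sym2 (Fin 3) → ℝ)
    (hc1 : c s((0 : Fin 3), (1 : Fin 3)) = ν) (hc2 : c s((1 : Fin 3), (2 : Fin 3)) = ν)
    (E' : Finset (Sym2 (Fin 3))) (hE' : IsTriAttack w' E')
    (hmin : ∀ F, IsTriAttack w' F → ∑ e ∈ E', c e ≤ ∑ e ∈ F, c e) :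
    (E'.card = 1 ↔
      w' s((0 : Fin 3), (1 : Fin 3)) + w' s((1 : Fin 3), (2 : Fin 3)) ≤
        w' s((0 : Fin 3), (2 : Fin 3))) ∧
    (w' s((0 : Fin 3), (2 : Fin 3)) <
        w' s((0 : Fin 3), (1 : Fin 3)) + w' s((1 : Fin 3), (2 : Fin 3)) → E' = ∅) := by
  obtain ⟨hsub, hpaths⟩ := hE'
  -- cost of any feasible set is its cardinality times ν
  have hcost : ∀ F : Finset (Sym2 (Fin 3)),
      ↑F ⊆ ({s((0 : Fin 3), (1 : Fin 3)), s((1 : Fin 3), (2 : Fin 3))} : Set (Sym2 (Fin 3))) →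
      ∑ e ∈ F, c e = F.card * ν := by
    intro F hF
    rw [Finset.sum_congr rfl (fun e he => ?_), Finset.sum_const, nsmul_eq_mul]
    have := hF he
    simp only [Set.mem_insert_iff, Set.mem_singleton_iff] at this
    rcases this with rfl | rfl
    · exact hc1
    · exact hc2
  -- part 2 : if the detour is strictly longer, the minimum attack is empty
  have part2 : w' s((0 : Fin 3), (2 : Fin 3)) <
      w' s((0 : Fin 3), (1 : Fin 3)) + w' s((1 : Fin 3), (2 : Fin 3)) → E' = ∅ := by
    intro hlt
    have hatk0 : IsTriAttack w' (∅ : Finset (Sym2 (Fin 3))) := by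
      constructor
      · simp
      · intro q hq hne
        rcases tri_path_edges q hq with h | h
        · exact absurd h hne
        · rw [walkLen, h]
          simpa using hlt
    have hle := hmin ∅ hatk0
    rw [hcost E' hsub] at hle
    simp only [Finset.sum_empty] at hle
    have hcard0 : E'.card = 0 := by
      by_contra hcne
      have h1 : (1 : ℝ) ≤ (E'.card : ℝ) := by
        exact_mod_cast Nat.one_le_iff_ne_zero.mpr hcne
      nlinarith
    exact Finset.card_eq_zero.mp hcard0
  refine ⟨⟨?_, ?_⟩, part2⟩
  · -- card = 1 → detour ≤ direct
    intro h1
    by_contra hlt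
    push_neg at hlt
    rw [part2 hlt] at h1
    simp at h1
  · -- detour ≤ direct → card = 1
    intro hle
    -- E' is nonempty: otherwise the detour path contradicts the attack property
    have hne : E' ≠ ∅ := by
      rintro rfl
      have h01 : ((⊤ : SimpleGraph (Fin 3)).deleteEdges
          ↑(∅ : Finset (Sym2 (Fin 3)))).Adj 0 1 := by
        simp [deleteEdges_adj]
      have h12 : ((⊤ : SimpleGraph (Fin 3)).deleteEdges
          ↑(∅ : Finset (Sym2 (Fin 3)))).Adj 1 2 := by
        simp [deleteEdges_adj]
      set P : ((⊤ : SimpleGraph (Fin 3)).deleteEdges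
          ↑(∅ : Finset (Sym2 (Fin 3)))).Walk 0 2 :=
        Walk.cons h01 (Walk.cons h12 Walk.nil) with hP
      have hPpath : P.IsPath := by
        rw [hP]
        simp [Walk.isPath_def, Walk.support_cons]
      have hPne : P.edges ≠ [s((0 : Fin 3), (2 : Fin 3))] := by
        rw [hP]
        simp [Walk.edges_cons]
      have := hpaths P hPpath hPne
      rw [hP, walkLen] at this
      simp [Walk.edges_cons] at this
      linarith
    have h1le : 1 ≤ E'.card := Finset.card_pos.mpr (Finset.nonempty_iff_ne_empty.mpr hne)
    have hub := hmin _ (tri_attack_single w')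
    rw [hcost E' hsub, hcost _ (by intro e he; simp at he; simp [he])] at hub
    simp only [Finset.card_singleton, Nat.cast_one, one_mul] at hub
    have hcle : (E'.card : ℝ) ≤ 1 := by
      by_contra hgt
      push_neg at hgt
      nlinarith
    have : E'.card ≤ 1 := by exact_mod_cast hcle
    omega
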